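/- For a finite positive sequence y = (y₁,...,yₙ) following the exact scaling relation k = c·yₖ^{−α} (so yₖ = (c/k)^{1/α}) with 0 < α < 2, the sample coefficient of variation CV(y) = STD(y)/mean(y) diverges as n → ∞; i.e., for every M > 0 there exists N such that CV(y) > M for all n ≥ N when α ≤ 1, and more generally the second sample moment grows faster than the square of the mean for α < 2. -/

import Mathlib

open Finset Filter

lemma sqrt_tendsto_atTop : Tendsto Real.sqrt atTop atTop := by
  apply tendsto_atTop_atTop.2
  intro b
  refine ⟨b ^ 2, fun a ha => ?_⟩
  calc b ≤ |b| := le_abs_self b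
    _ = Real.sqrt (b ^ 2) := (Real.sqrt_sq_eq_abs b).symm
    _ ≤ Real.sqrt a := Real.sqrt_le_sqrt ha

lemma sum_rpow_neg_le (r : ℝ) (hr0 : 0 < r) (hr1 : r < 1) (n : ℕ) :
    ∑ k ∈ Finset.Icc 1 n, (k : ℝ) ^ (-r) ≤ (1 / (1 - r)) * (n : ℝ) ^ (1 - r) := by
  induction n with
  | zero => simp [Real.zero_rpow (by linarith : (1:ℝ) - r ≠ 0)]
  | succ n ih =>
    rw [Finset.sum_Icc_succ_top (by omega : 1 ≤ n + 1)]
    have ha : (1:ℝ) ≤ (n : ℝ) + 1 := le_add_of_nonneg_left (Nat.cast_nonneg n)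
    have ha0 : (0:ℝ) < (n : ℝ) + 1 := by positivity
    -- key step: ((n+1):ℝ)^(-r) ≤ (1/(1-r)) * ((n+1)^(1-r) - n^(1-r))
    have key : (1 - r) * ((n : ℝ) + 1) ^ (-r) ≤ ((n : ℝ) + 1) ^ (1 - r) - (n : ℝ) ^ (1 - r) := by
      have hs : (-1:ℝ) ≤ -(1 / ((n:ℝ) + 1)) := by
        rw [neg_le_neg_iff]
        exact div_le_one_of_le₀ ha (by positivity)
      have hb := rpow_one_add_le_one_add_mul_self hs (by linarith : (0:ℝ) ≤ 1 - r)
        (by linarith : (1:ℝ) - r ≤ 1)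
      -- hb : (1 + -(1/(n+1))) ^ (1-r) ≤ 1 + (1-r) * -(1/(n+1))
      have h1 : (1:ℝ) + -(1 / ((n:ℝ) + 1)) = (n : ℝ) / ((n:ℝ) + 1) := by
        field_simp
        ring
      rw [h1] at hb
      have hmul := mul_le_mul_of_nonneg_right hb (Real.rpow_nonneg ha0.le (1 - r))
      have h2 : ((n:ℝ) / ((n:ℝ) + 1)) ^ (1 - r) * ((n:ℝ) + 1) ^ (1 - r) = (n : ℝ) ^ (1 - r) := by
        rw [← Real.mul_rpow (by positivity) ha0.le, div_mul_cancel₀]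
        exact ha0.ne'
      rw [h2] at hmul
      have h3 : (1 + (1 - r) * -(1 / ((n:ℝ) + 1))) * ((n:ℝ) + 1) ^ (1 - r)
          = ((n:ℝ) + 1) ^ (1 - r) - (1 - r) * (((n:ℝ) + 1) ^ (1 - r) / ((n:ℝ) + 1)) := by
        ring
      rw [h3] at hmul
      have h4 : ((n:ℝ) + 1) ^ (1 - r) / ((n:ℝ) + 1) = ((n:ℝ) + 1) ^ (-r) := by
        rw [eq_comm, eq_div_iff ha0.ne', ← Real.rpow_add_one ha0.ne']
        ring_nf
      rw [h4] at hmul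
      linarith
    have hpos : (0:ℝ) < 1 - r := by linarith
    have hcast : ((n + 1 : ℕ) : ℝ) = (n : ℝ) + 1 := by push_cast; ring
    rw [hcast]
    have : ((n:ℝ) + 1) ^ (-r) ≤ (1 / (1 - r)) * (((n : ℝ) + 1) ^ (1 - r) - (n : ℝ) ^ (1 - r)) := by
      rw [one_div_mul_eq_div, le_div_iff₀ hpos]
      linarith [key]
    linarith [ih, this]

theorem stmt_18 (c α : ℝ) (hc : 0 < c) (hα : 0 < α) (hα2 : α < 2) :
    let y : ℕ → ℝ := fun k => (c / k) ^ (1 / α)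
    let mean : ℕ → ℝ := fun n => (1 / (n : ℝ)) * ∑ k ∈ Finset.Icc 1 n, y k
    let std : ℕ → ℝ := fun n =>
      Real.sqrt ((1 / ((n : ℝ) - 1)) * ∑ k ∈ Finset.Icc 1 n, (y k - mean n) ^ 2)
    Tendsto (fun n => std n / mean n) atTop atTop ∧
    Tendsto (fun n : ℕ => ((1 / (n : ℝ)) * ∑ k ∈ Finset.Icc 1 n, y k ^ 2) / (mean n) ^ 2)
      atTop atTop := by
  intro y mean std
  set p : ℝ := 1 / α with hpdef
  have hp2 : 1 / 2 < p := by
    rw [hpdef, div_lt_div_iff₀ two_pos hα]; linarith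
  set r : ℝ := min p (3/4) with hrdef
  have hr0 : 1/2 < r := lt_min hp2 (by norm_num)
  have hr1 : r < 1 := lt_of_le_of_lt (min_le_right _ _) (by norm_num)
  have hrp : r ≤ p := min_le_left _ _
  have hcp : (0:ℝ) < c ^ p := Real.rpow_pos_of_pos hc p
  have hy : ∀ k : ℕ, 1 ≤ k → y k = c ^ p * (k : ℝ) ^ (-p) := by
    intro k hk
    have hk0 : (0:ℝ) < (k:ℝ) := by exact_mod_cast hk
    simp only [y, hpdef]
    rw [Real.div_rpow hc.le hk0.le, Real.rpow_neg hk0.le, div_eq_mul_inv]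
  set S1 : ℕ → ℝ := fun n => ∑ k ∈ Finset.Icc 1 n, (k : ℝ) ^ (-p) with hS1def
  set Q : ℕ → ℝ := fun n => ∑ k ∈ Finset.Icc 1 n, y k ^ 2 with hQdef
  have hsumy : ∀ n : ℕ, ∑ k ∈ Finset.Icc 1 n, y k = c ^ p * S1 n := by
    intro n
    rw [hS1def, mul_sum]
    exact Finset.sum_congr rfl fun k hk => hy k (Finset.mem_Icc.1 hk).1
  have hS1pos : ∀ n : ℕ, 1 ≤ n → 0 < S1 n := by
    intro n hn
    apply Finset.sum_pos
    · intro k hk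
      have : (0:ℝ) < (k:ℝ) := by exact_mod_cast (Finset.mem_Icc.1 hk).1
      exact Real.rpow_pos_of_pos this _
    · exact ⟨1, Finset.mem_Icc.2 ⟨le_refl 1, hn⟩⟩
  have hS1le : ∀ n : ℕ, S1 n ≤ (1 / (1 - r)) * (n : ℝ) ^ (1 - r) := by
    intro n
    refine le_trans ?_ (sum_rpow_neg_le r (by linarith) hr1 n)
    apply Finset.sum_le_sum
    intro k hk
    have hk1 : (1:ℝ) ≤ (k:ℝ) := by exact_mod_cast (Finset.mem_Icc.1 hk).1
    exact Real.rpow_le_rpow_of_exponent_le hk1 (by linarith)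
  have hQge : ∀ n : ℕ, 1 ≤ n → (c ^ p) ^ 2 ≤ Q n := by
    intro n hn
    have h1 : y 1 = c ^ p := by
      rw [hy 1 le_rfl]; norm_num
    calc (c ^ p) ^ 2 = y 1 ^ 2 := by rw [h1]
      _ ≤ Q n := Finset.single_le_sum (fun i _ => sq_nonneg (y i))
            (Finset.mem_Icc.2 ⟨le_refl 1, hn⟩)
  have hmean : ∀ n : ℕ, mean n = (1 / (n : ℝ)) * (c ^ p * S1 n) := by
    intro n; simp only [mean]; rw [hsumy]
  have hmeanpos : ∀ n : ℕ, 1 ≤ n → 0 < mean n := by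
    intro n hn
    have hN : (0:ℝ) < (n:ℝ) := by exact_mod_cast hn
    rw [hmean]
    exact mul_pos (by positivity) (mul_pos hcp (hS1pos n hn))
  -- lower bound for the normalized second moment
  have hRlb : ∀ n : ℕ, 1 ≤ n →
      (1 - r) ^ 2 * (n : ℝ) ^ (2 * r - 1) ≤ ((1 / (n : ℝ)) * Q n) / (mean n) ^ 2 := by
    intro n hn
    have hN : (0:ℝ) < (n:ℝ) := by exact_mod_cast hn
    have hA : (0:ℝ) < (n:ℝ) ^ (1 - r) := Real.rpow_pos_of_pos hN _
    have hB : (0:ℝ) < (n:ℝ) ^ (2 * r - 1) := Real.rpow_pos_of_pos hN _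
    have hAB : (n:ℝ) ^ (2 * r - 1) * ((n:ℝ) ^ (1 - r)) ^ 2 = (n:ℝ) := by
      rw [sq, ← Real.rpow_add hN, ← Real.rpow_add hN]
      have h : 2 * r - 1 + (1 - r + (1 - r)) = 1 := by ring
      rw [h, Real.rpow_one]
    have hmp := hmeanpos n hn
    rw [le_div_iff₀ (pow_pos hmp 2)]
    have hmean_le : mean n ≤ (1 / (n:ℝ)) * (c ^ p * ((1 / (1 - r)) * (n:ℝ) ^ (1 - r))) := by
      rw [hmean]
      have := hS1le n
      have h1r : (0:ℝ) < 1 - r := by linarith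
      gcongr
    have hsq : (mean n) ^ 2 ≤ ((1 / (n:ℝ)) * (c ^ p * ((1 / (1 - r)) * (n:ℝ) ^ (1 - r)))) ^ 2 :=
      pow_le_pow_left₀ hmp.le hmean_le 2
    calc (1 - r) ^ 2 * (n:ℝ) ^ (2 * r - 1) * (mean n) ^ 2
        ≤ (1 - r) ^ 2 * (n:ℝ) ^ (2 * r - 1) *
            ((1 / (n:ℝ)) * (c ^ p * ((1 / (1 - r)) * (n:ℝ) ^ (1 - r)))) ^ 2 := by
          have h1r : (0:ℝ) < 1 - r := by linarith
          gcongr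
      _ = (1 / (n:ℝ)) * (c ^ p) ^ 2 := by
          have h1r : (1:ℝ) - r ≠ 0 := by intro h; linarith [hr1]
          have key : ∀ A B C N : ℝ, 0 < N → B * A ^ 2 = N →
              (1 - r) ^ 2 * B * ((1 / N) * (C * ((1 / (1 - r)) * A))) ^ 2 = (1 / N) * C ^ 2 := by
            intro A B C N hN hAB
            field_simp
            linear_combination C ^ 2 * hAB
          exact key _ _ _ _ hN hAB
      _ ≤ (1 / (n:ℝ)) * Q n := by
          gcongr
          exact hQge n hn
  -- tendsto of the lower bound
  have hglim : Tendsto (fun n : ℕ => (1 - r) ^ 2 * (n : ℝ) ^ (2 * r - 1)) atTop atTop := by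
    have h1 : Tendsto (fun x : ℝ => x ^ (2 * r - 1)) atTop atTop :=
      tendsto_rpow_atTop (by linarith)
    have h2 : Tendsto (fun n : ℕ => ((n:ℝ)) ^ (2 * r - 1)) atTop atTop :=
      h1.comp tendsto_natCast_atTop_atTop
    exact h2.const_mul_atTop (by nlinarith : (0:ℝ) < (1 - r) ^ 2)
  have hR : Tendsto
      (fun n : ℕ => ((1 / (n : ℝ)) * ∑ k ∈ Finset.Icc 1 n, y k ^ 2) / (mean n) ^ 2)
      atTop atTop := by
    apply tendsto_atTop_mono' atTop ?_ hglim
    filter_upwards [eventually_ge_atTop 1] with n hn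
    exact hRlb n hn
  refine ⟨?_, hR⟩
  -- part 1 : std / mean
  have hsqrtlim : Tendsto (fun n : ℕ => Real.sqrt
      (((1 / (n : ℝ)) * ∑ k ∈ Finset.Icc 1 n, y k ^ 2) / (mean n) ^ 2 - 1)) atTop atTop :=
    sqrt_tendsto_atTop.comp (tendsto_atTop_add_const_right atTop (-1) hR)
  apply tendsto_atTop_mono' atTop ?_ hsqrtlim
  filter_upwards [eventually_ge_atTop 2, hR.eventually_ge_atTop 1] with n hn2 hRn1
  have hn1 : 1 ≤ n := by omega
  have hN : (0:ℝ) < (n:ℝ) := by exact_mod_cast hn1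
  have hN2 : (2:ℝ) ≤ (n:ℝ) := by exact_mod_cast hn2
  have hN1 : (0:ℝ) < (n:ℝ) - 1 := by linarith
  have hmp := hmeanpos n hn1
  set m : ℝ := mean n with hm
  set Rn : ℝ := ((1 / (n : ℝ)) * Q n) / m ^ 2 with hRn
  -- sum of squared deviations
  have hcard : (Finset.Icc 1 n).card = n := by
    rw [Nat.card_Icc]; omega
  have hSy : ∑ k ∈ Finset.Icc 1 n, y k = (n:ℝ) * m := by
    rw [hm]
    simp only [mean]
    field_simp
  have hdev : ∑ k ∈ Finset.Icc 1 n, (y k - m) ^ 2 = Q n - (n:ℝ) * m ^ 2 := by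
    have h1 : ∀ k ∈ Finset.Icc 1 n, (y k - m) ^ 2 = y k ^ 2 - 2 * m * y k + m ^ 2 := by
      intro k _; ring
    rw [Finset.sum_congr rfl h1]
    rw [Finset.sum_add_distrib, Finset.sum_sub_distrib, ← Finset.mul_sum, hSy,
      Finset.sum_const, hcard, nsmul_eq_mul]
    rw [hQdef]
    ring
  -- Q n = n * Rn * m^2
  have hQeq : Q n = (n:ℝ) * Rn * m ^ 2 := by
    rw [hRn]
    field_simp
  have hdevnn : (0:ℝ) ≤ ∑ k ∈ Finset.Icc 1 n, (y k - m) ^ 2 :=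
    Finset.sum_nonneg fun k _ => sq_nonneg _
  have hW : (0:ℝ) ≤ (1 / ((n:ℝ) - 1)) * ∑ k ∈ Finset.Icc 1 n, (y k - m) ^ 2 := by
    positivity
  have hstd : std n = Real.sqrt ((1 / ((n:ℝ) - 1)) * ∑ k ∈ Finset.Icc 1 n, (y k - m) ^ 2) := rfl
  -- the key inequality
  have hdivsqrt : std n / m
      = Real.sqrt (((1 / ((n:ℝ) - 1)) * ∑ k ∈ Finset.Icc 1 n, (y k - m) ^ 2) / m ^ 2) := by
    rw [hstd, Real.sqrt_div hW, Real.sqrt_sq hmp.le]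
  have hWm : ((1 / ((n:ℝ) - 1)) * ∑ k ∈ Finset.Icc 1 n, (y k - m) ^ 2) / m ^ 2
      = (n:ℝ) * (Rn - 1) / ((n:ℝ) - 1) := by
    rw [hdev, hQeq]
    field_simp
  have hRge : Rn - 1 ≤ (n:ℝ) * (Rn - 1) / ((n:ℝ) - 1) := by
    rw [le_div_iff₀ hN1]
    have h1 : (0:ℝ) ≤ Rn - 1 := by
      have : (1:ℝ) ≤ Rn := hRn1
      linarith
    nlinarith
  calc Real.sqrt (((1 / (n : ℝ)) * ∑ k ∈ Finset.Icc 1 n, y k ^ 2) / mean n ^ 2 - 1)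
      = Real.sqrt (Rn - 1) := by rw [hRn, hQdef, hm]
    _ ≤ Real.sqrt ((n:ℝ) * (Rn - 1) / ((n:ℝ) - 1)) := Real.sqrt_le_sqrt hRge
    _ = std n / m := by rw [hdivsqrt, hWm]
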